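/- (Lemma 3.) In the pre-extension setting, let μ, ν : R × R → K_A be arbitrary functions with values in the bicenter, and set f' = f + μ, g' = g + ν. Let ξ', η', α', λ', ρ' be defined from f', g' (and the same φ, ψ) by the same formulas as ξ, η, α, λ, ρ. Then for all x, y, z ∈ R: ξ'(x,y,z) = ξ(x,y,z) + μ(y,z) − μ(x+y,z) + μ(x,y+z) − μ(x,y); η'(x,y) = η(x,y) + μ(x,y) − μ(y,x); α'(x,y,z) = α(x,y,z) + φ_x(ν(y,z)) − ν(xy,z) + ν(x,yz) − ψ_z(ν(x,y)); λ'(x,y,z) = λ(x,y,z) + ν(x,y+z) − ν(x,y) − ν(x,z) + φ_x(μ(y,z)) − μ(xy,xz); ρ'(x,y,z) = ρ(x,y,z) + ν(x+y,z) − ν(x,z) − ν(y,z) + ψ_z(μ(x,y)) − μ(xz,yz). -/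
import Mathlib


variable {R A : Type*}

/-- The bicenter `K_A = {c ∈ A : c·a = 0 = a·c for all a}`. -/
def bicenter (A : Type*) [NonUnitalRing A] : Set A :=
  {c | ∀ b : A, c * b = 0 ∧ b * c = 0}

/-- A pre-extension datum `(φ, ψ, f, g)` of the ring `A` by the ring `R`:
`φ_x, ψ_x ∈ End_ℤ(A)` and `f, g : R² → A` satisfying the relations (10) and the
defining relations of the factor sets. -/
def IsPreExtension [Ring R] [NonUnitalRing A]
    (φ ψ : R → AddMonoid.End A) (f g : R → R → A) : Prop :=
  (∀ a : A, φ 1 a = a) ∧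
  (∀ a : A, ψ 1 a = a) ∧
  (∀ (x : R) (a b : A), a * φ x b = ψ x a * b) ∧
  (∀ (x : R) (a b : A), φ x (a * b) = φ x a * b) ∧
  (∀ (x : R) (a b : A), ψ x (b * a) = b * ψ x a) ∧
  (∀ (x : R) (a b : A), ψ x b * a = b * φ x a) ∧
  (∀ (x y : R) (a : A), φ x (ψ y a) = ψ y (φ x a)) ∧
  (∀ (x y : R) (a : A), φ x (φ y a) = φ (x * y) a + g x y * a) ∧
  (∀ (x y : R) (a : A), ψ y (ψ x a) = ψ (x * y) a + a * g x y) ∧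
  (∀ (x y : R) (a : A), φ x a + φ y a = φ (x + y) a + f x y * a) ∧
  (∀ (x y : R) (a : A), ψ x a + ψ y a = ψ (x + y) a + a * f x y)

variable [Ring R] [NonUnitalRing A]

/-- The obstruction component `ξ`. -/
def xiObs (f : R → R → A) (x y z : R) : A :=
  f y z - f (x + y) z + f x (y + z) - f x y

/-- The obstruction component `η`. -/
def etaObs (f : R → R → A) (x y : R) : A :=
  f x y - f y x

/-- The obstruction component `α`. -/
def alphaObs (φ ψ : R → AddMonoid.End A) (g : R → R → A) (x y z : R) : A :=
  φ x (g y z) - g (x * y) z + g x (y * z) - ψ z (g x y)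

/-- The obstruction component `λ`. -/
def lambdaObs (φ : R → AddMonoid.End A) (f g : R → R → A) (x y z : R) : A :=
  φ x (f y z) - f (x * y) (x * z) + g x (y + z) - g x y - g x z

/-- The obstruction component `ρ`. -/
def rhoObs (ψ : R → AddMonoid.End A) (f g : R → R → A) (x y z : R) : A :=
  ψ z (f x y) - f (x * z) (y * z) + g (x + y) z - g x z - g y z

/-- Lemma 3: replacing `f, g` by `f' = f + μ`, `g' = g + ν` with
`μ, ν` taking values in the bicenter changes the obstruction components by the
stated coboundary terms. -/
theorem obstruction_change_of_factor_sets
    [Nontrivial R] (φ ψ : R → AddMonoid.End A) (f g : R → R → A)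
    (h : IsPreExtension φ ψ f g)
    (μ ν : R → R → A)
    (hμ : ∀ x y : R, μ x y ∈ bicenter A)
    (hν : ∀ x y : R, ν x y ∈ bicenter A)
    (f' g' : R → R → A)
    (hf' : ∀ x y : R, f' x y = f x y + μ x y)
    (hg' : ∀ x y : R, g' x y = g x y + ν x y) :
    ∀ x y z : R,
      xiObs f' x y z
        = xiObs f x y z + μ y z - μ (x + y) z + μ x (y + z) - μ x y ∧
      etaObs f' x y
        = etaObs f x y + μ x y - μ y x ∧
      alphaObs φ ψ g' x y z
        = alphaObs φ ψ g x y z + φ x (ν y z) - ν (x * y) z + ν x (y * z)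
            - ψ z (ν x y) ∧
      lambdaObs φ f' g' x y z
        = lambdaObs φ f g x y z + ν x (y + z) - ν x y - ν x z + φ x (μ y z)
            - μ (x * y) (x * z) ∧
      rhoObs ψ f' g' x y z
        = rhoObs ψ f g x y z + ν (x + y) z - ν x z - ν y z + ψ z (μ x y)
            - μ (x * z) (y * z) := by
  intro x y z
  refine ⟨?_, ?_, ?_, ?_, ?_⟩ <;>
    simp only [xiObs, etaObs, alphaObs, lambdaObs, rhoObs, hf', hg', map_add] <;>
    abel
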